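/- Let B be a rooted forest (with a fixed labeling of its vertices) and let C be an admissible cut of B. For admissible cuts D, D' of B, write D ⊆ D' if every vertex of P_D(B) is a vertex of P_{D'}(B). Then there is a bijection D ↦ D̄ from the set of admissible cuts D of B with C ⊆ D onto the set of admissible cuts of R_C(B), which preserves inclusion (for cuts D, D' of B containing C, D ⊆ D' if and only if D̄ ⊆ D̄') and satisfies R_D(B) ≅ R_{D̄}(R_C(B)) for every such D. -/

import Mathlib

open scoped Classical

/-- Concrete (labeled) rooted trees: a root with a list of subtrees. -/
inductive RTree : Type
  | node : List RTree → RTree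

/-- Shapes of admissible cuts: at each tree, either the full cut
(everything, including the root, goes to the pruned part `P`), or a choice of
an admissible cut of each child subtree.  A `full` occurring strictly inside
corresponds to cutting the edge above that vertex. -/
inductive CutShape : Type
  | full
  | branch : List CutShape → CutShape

namespace CK

/-- Number of vertices of a forest. -/
def sizeL : List RTree → ℕ
  | [] => 0
  | .node l :: ts => 1 + sizeL l + sizeL ts

/-- All admissible cuts of a forest (a choice of admissible cut of each tree). -/
def cutsF : List RTree → List (List CutShape)
  | [] => [[]]
  | .node l :: ts =>
      (CutShape.full :: (cutsF l).map CutShape.branch).flatMap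
        fun c => (cutsF ts).map (c :: ·)

/-- The root part `R_C(F)` of a cut. -/
def Rcut : List RTree → List CutShape → List RTree
  | [], _ => []
  | _ :: _, [] => []
  | .node _ :: ts, .full :: cs => Rcut ts cs
  | .node l :: ts, .branch ds :: cs => RTree.node (Rcut l ds) :: Rcut ts cs

/-- The pruned part `P_C(F)` of a cut. -/
def Pcut : List RTree → List CutShape → List RTree
  | [], _ => []
  | _ :: _, [] => []
  | .node l :: ts, .full :: cs => RTree.node l :: Pcut ts cs
  | .node l :: ts, .branch ds :: cs => Pcut l ds ++ Pcut ts cs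

/-- Number of `full`s occurring in a cut. -/
def fullsL : List CutShape → ℕ
  | [] => 0
  | .full :: cs => 1 + fullsL cs
  | .branch ds :: cs => fullsL ds + fullsL cs

/-- A list of concrete forests containing (representatives of) every forest
with at most `n` vertices. -/
def forestsUpTo : ℕ → List (List RTree)
  | 0 => [[]]
  | n+1 => [] :: (forestsUpTo n).flatMap fun l => (forestsUpTo n).map fun F => RTree.node l :: F

/-- Isomorphism of rooted trees (non-planar): a root-preserving bijection, i.e.
the lists of subtrees agree up to permutation and isomorphism. -/
inductive Iso : RTree → RTree → Prop
  | node {l₁ l l₂ : List RTree} : List.Forall₂ Iso l₁ l → l.Perm l₂ → Iso (.node l₁) (.node l₂)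

/-- Isomorphism classes of rooted trees. -/
abbrev TreeClass : Type := Quot Iso

/-- Isomorphism classes of rooted forests = multisets of tree classes.
The empty forest is `0`. -/
abbrev ForestClass : Type := Multiset TreeClass

/-- Isomorphism class of a tree. -/
def clT (t : RTree) : TreeClass := Quot.mk _ t

/-- Isomorphism class of a forest. -/
def clF (F : List RTree) : ForestClass := (F.map clT : List TreeClass)

/-- A concrete representative of a forest class. -/
noncomputable def repF (M : ForestClass) : List RTree := M.toList.map Quot.out

/-- A concrete representative of a tree class. -/
noncomputable def repT (T : TreeClass) : RTree := T.out

/-- Number of vertices of a forest class. -/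
noncomputable def sizeC (M : ForestClass) : ℕ := sizeL (repF M)

/-- Number of vertices of a tree class. -/
noncomputable def sizeT (T : TreeClass) : ℕ := sizeL [repT T]

/-- The Hall algebra `H`: finitely supported ℚ-valued functions on
isomorphism classes of rooted forests, with basis the delta functions. -/
abbrev H : Type := ForestClass →₀ ℚ

/-- The basis element `δ_A` of `H`. -/
noncomputable def delta (A : ForestClass) : H := Finsupp.single A 1

/-- `n(A,B;M)`: the number of admissible cuts `C` of `M` with
`P_C(M) ≅ A` and `R_C(M) ≅ B`. -/
noncomputable def nCuts (A B M : ForestClass) : ℕ :=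
  (cutsF (repF M)).countP fun c =>
    decide (clF (Pcut (repF M) c) = A ∧ clF (Rcut (repF M) c) = B)

/-- A finite set of forest classes containing all classes with at most `n`
vertices. -/
noncomputable def forestCand (n : ℕ) : Finset ForestClass :=
  ((forestsUpTo n).map clF).toFinset

/-- A finite set of tree classes containing all classes with at most `n+1`
vertices. -/
noncomputable def treeCand (n : ℕ) : Finset TreeClass :=
  ((forestsUpTo n).map fun F => clT (RTree.node F)).toFinset

/-- The Hall product on basis elements: `δ_A × δ_B = Σ_M n(A,B;M)·δ_M`
(every `M` with `n(A,B;M) ≠ 0` has exactly `sizeC A + sizeC B` vertices). -/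
noncomputable def mulBasis (A B : ForestClass) : H :=
  ∑ M ∈ forestCand (sizeC A + sizeC B), (nCuts A B M : ℚ) • delta M

/-- The Hall product on `H`, extended bilinearly from basis elements. -/
noncomputable def hmul (f g : H) : H :=
  f.sum fun A a => g.sum fun B b => (a * b) • mulBasis A B

/-- The Connes-Kreimer Lie algebra `n_T` (as a vector space): the span of
isomorphism classes of rooted trees. -/
abbrev nT : Type := TreeClass →₀ ℚ

/-- The basis element of `n_T` corresponding to a rooted tree `T`. -/
noncomputable def tau (T : TreeClass) : nT := Finsupp.single T 1

/-- `a(T₁,T₂;T)`: the number of edges `e` of `T` such that the single-edge cut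
at `e` has pruned part `≅ T₁` and root part `≅ T₂`. -/
noncomputable def aCount (T₁ T₂ T : TreeClass) : ℕ :=
  (cutsF [repT T]).countP fun c =>
    decide (fullsL c = 1 ∧ clF (Pcut [repT T] c) = ({T₁} : Multiset TreeClass)
      ∧ clF (Rcut [repT T] c) = ({T₂} : Multiset TreeClass))

/-- The grafting (pre-Lie) product on basis elements:
`T₁ * T₂ = Σ_T a(T₁,T₂;T)·T`. -/
noncomputable def graftBasis (T₁ T₂ : TreeClass) : nT :=
  ∑ T ∈ treeCand (sizeT T₁ + sizeT T₂), (aCount T₁ T₂ T : ℚ) • tau T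

/-- The grafting (pre-Lie) product on `n_T`, extended bilinearly. -/
noncomputable def graft (x y : nT) : nT :=
  x.sum fun T₁ a => y.sum fun T₂ b => (a * b) • graftBasis T₁ T₂

/-- The Connes-Kreimer bracket `[x,y] = x*y - y*x` on `n_T`. -/
noncomputable def ckBracket (x y : nT) : nT := graft x y - graft y x

/-- `Ẽ_A δ_B = Σ_C δ_{R_C(B)}`, the sum over admissible cuts `C` of `B` with
`P_C(B) ≅ A`. -/
noncomputable def elimBasis (A B : ForestClass) : H :=
  (((cutsF (repF B)).filter fun c => decide (clF (Pcut (repF B) c) = A)).map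
    fun c => delta (clF (Rcut (repF B) c))).sum

/-- The elimination operator `E_A` (here on `H ≅ H*`, identifying `φ_B` with
`δ_B`). -/
noncomputable def elim (A : ForestClass) : H →ₗ[ℚ] H :=
  Finsupp.lsum ℚ fun B => LinearMap.toSpanSingleton ℚ H (elimBasis A B)

/-- `Ẽ^top_A δ_B = Σ_C δ_{P_C(B)}`, the sum over admissible cuts `C` of `B`
with `R_C(B) ≅ A`. -/
noncomputable def topElimBasis (A B : ForestClass) : H :=
  (((cutsF (repF B)).filter fun c => decide (clF (Rcut (repF B) c) = A)).map
    fun c => delta (clF (Pcut (repF B) c))).sum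

/-- The top-elimination operator `E^top_A`. -/
noncomputable def topElim (A : ForestClass) : H →ₗ[ℚ] H :=
  Finsupp.lsum ℚ fun B => LinearMap.toSpanSingleton ℚ H (topElimBasis A B)

/-- `H ⊗ H`, realized as finitely supported functions on pairs of classes. -/
abbrev H2 : Type := (ForestClass × ForestClass) →₀ ℚ

/-- `Δ(δ_M) = Σ δ_A ⊗ δ_B`, the sum over ordered pairs `(A,B)` of classes with
`A ⊔ B ≅ M`. -/
noncomputable def deltaBasis (M : ForestClass) : H2 :=
  ∑ A ∈ M.powerset.toFinset, Finsupp.single (A, M - A) 1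

/-- The coproduct `Δ : H → H ⊗ H`. -/
noncomputable def coprod : H →ₗ[ℚ] H2 :=
  Finsupp.lsum ℚ fun M => LinearMap.toSpanSingleton ℚ H2 (deltaBasis M)

/-- Shift the index of the tree a vertex position refers to by one. -/
def bump : List ℕ → List ℕ
  | [] => []
  | i :: p => (i + 1) :: p

/-- The vertex positions of a concrete (labeled) forest: a vertex is addressed
by the list of child indices leading to it (the head being the index of its
tree in the forest). -/
def posF : List RTree → List (List ℕ)
  | [] => []
  | .node l :: ts => [0] :: ((posF l).map (List.cons 0) ++ (posF ts).map bump)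

/-- The vertices of `B` lying in the pruned part `P_D(B)` of a cut `D`. -/
def pVerts : List RTree → List CutShape → List (List ℕ)
  | [], _ => []
  | _ :: _, [] => []
  | .node l :: ts, .full :: cs =>
      [0] :: ((posF l).map (List.cons 0) ++ (pVerts ts cs).map bump)
  | .node l :: ts, .branch ds :: cs =>
      (pVerts l ds).map (List.cons 0) ++ (pVerts ts cs).map bump

/-- `D ⊆ D'` for admissible cuts of the (labeled) forest `B`: every vertex of
`P_D(B)` is a vertex of `P_{D'}(B)`. -/
def cutLE (B : List RTree) (D D' : List CutShape) : Prop :=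
  ∀ p ∈ pVerts B D, p ∈ pVerts B D'

-- ### basic lemmas

theorem mem_cutsF_nil {x : List CutShape} : x ∈ cutsF [] ↔ x = [] := by
  simp [cutsF]

theorem mem_cutsF_cons {l : List RTree} {ts : List RTree} {c : CutShape}
    {cs : List CutShape} :
    (c :: cs) ∈ cutsF (.node l :: ts) ↔
      (c = .full ∨ ∃ es ∈ cutsF l, c = .branch es) ∧ cs ∈ cutsF ts := by
  simp only [cutsF, List.mem_flatMap, List.mem_map, List.mem_cons]
  constructor
  · rintro ⟨a, ha, x, hx, hax⟩
    injection hax with h1 h2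
    subst h1; subst h2
    rcases ha with h | ⟨es, hes, h⟩
    · exact ⟨Or.inl h, hx⟩
    · exact ⟨Or.inr ⟨es, hes, h.symm⟩, hx⟩
  · rintro ⟨h | ⟨es, hes, rfl⟩, hcs⟩
    · exact ⟨c, Or.inl h, cs, hcs, rfl⟩
    · exact ⟨.branch es, Or.inr ⟨es, hes, rfl⟩, cs, hcs, rfl⟩

theorem nil_not_mem_cutsF {t : RTree} {ts : List RTree} :
    ([] : List CutShape) ∉ cutsF (t :: ts) := by
  cases t with
  | node l => simp [cutsF]

theorem posF_ne_nil : ∀ (B : List RTree), ∀ p ∈ posF B, p ≠ []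
  | [] => by simp [posF]
  | .node l :: ts => by
    intro p hp
    simp only [posF, List.mem_cons, List.mem_append, List.mem_map] at hp
    rcases hp with rfl | ⟨q, _, rfl⟩ | ⟨q, hq, rfl⟩
    · simp
    · simp
    · have := posF_ne_nil ts q hq
      cases q with
      | nil => exact absurd rfl this
      | cons i p => simp [bump]

theorem pVerts_subset_posF :
    ∀ (B : List RTree) (C : List CutShape), ∀ p ∈ pVerts B C, p ∈ posF B
  | [], _ => by simp [pVerts]
  | _ :: _, [] => by simp [pVerts]
  | .node l :: ts, .full :: cs => by
    intro p hp
    simp only [pVerts, posF, List.mem_cons, List.mem_append, List.mem_map] at hp ⊢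
    rcases hp with rfl | ⟨q, hq, rfl⟩ | ⟨q, hq, rfl⟩
    · exact Or.inl rfl
    · exact Or.inr (Or.inl ⟨q, hq, rfl⟩)
    · exact Or.inr (Or.inr ⟨q, pVerts_subset_posF ts cs q hq, rfl⟩)
  | .node l :: ts, .branch ds :: cs => by
    intro p hp
    simp only [pVerts, posF, List.mem_cons, List.mem_append, List.mem_map] at hp ⊢
    rcases hp with ⟨q, hq, rfl⟩ | ⟨q, hq, rfl⟩
    · exact Or.inr (Or.inl ⟨q, pVerts_subset_posF l ds q hq, rfl⟩)
    · exact Or.inr (Or.inr ⟨q, pVerts_subset_posF ts cs q hq, rfl⟩)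

theorem pVerts_ne_nil {B : List RTree} {C : List CutShape} :
    ∀ p ∈ pVerts B C, p ≠ [] :=
  fun p hp => posF_ne_nil B p (pVerts_subset_posF B C p hp)

theorem mem_map_cons0 {X Y : List (List ℕ)} (hY : ∀ q ∈ Y, q ≠ []) {p : List ℕ} :
    (0 :: p) ∈ X.map (List.cons 0) ++ Y.map bump ↔ p ∈ X := by
  simp only [List.mem_append, List.mem_map]
  constructor
  · rintro (⟨q, hq, h⟩ | ⟨q, hq, h⟩)
    · cases h; exact hq
    · exfalso
      cases q with
      | nil => exact hY _ hq rfl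
      | cons i r => simp [bump] at h
  · intro h; exact Or.inl ⟨p, h, rfl⟩

theorem mem_map_bump {X Y : List (List ℕ)} (hY : ∀ q ∈ Y, q ≠ []) {i : ℕ} {p : List ℕ} :
    ((i + 1) :: p) ∈ X.map (List.cons 0) ++ Y.map bump ↔ (i :: p) ∈ Y := by
  simp only [List.mem_append, List.mem_map]
  constructor
  · rintro (⟨q, hq, h⟩ | ⟨q, hq, h⟩)
    · simp at h
    · cases q with
      | nil => exact absurd rfl (hY _ hq)
      | cons j r =>
        simp only [bump] at h
        obtain ⟨h1, h2⟩ := List.cons.injEq .. ▸ h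
        injection h with h1 h2
        obtain rfl : j = i := by omega
        cases h2; exact hq
  · intro h; exact Or.inr ⟨i :: p, h, rfl⟩

-- ### cutLE characterizations

theorem cutLE_full_cons {l ts : List RTree} {cs : List CutShape} {d : CutShape}
    {ds : List CutShape} :
    cutLE (.node l :: ts) (.full :: cs) (d :: ds) ↔ d = .full ∧ cutLE ts cs ds := by
  constructor
  · intro h
    have h0 : [0] ∈ pVerts (.node l :: ts) (d :: ds) := by
      apply h; simp [pVerts]
    have hd : d = .full := by
      cases d with
      | full => rfl
      | branch fs =>
        exfalso
        simp only [pVerts] at h0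
        rcases (mem_map_cons0 (Y := pVerts ts ds) pVerts_ne_nil (X := pVerts l fs)
            (p := ([] : List ℕ))).1 h0 with h'
        exact pVerts_ne_nil _ h' rfl
    subst hd
    refine ⟨rfl, fun p hp => ?_⟩
    have hpne := pVerts_ne_nil p hp
    cases p with
    | nil => exact absurd rfl hpne
    | cons i q =>
      have : bump (i :: q) ∈ pVerts (.node l :: ts) (CutShape.full :: ds) := by
        apply h
        simp only [pVerts, List.mem_cons]
        right
        exact List.mem_append_right _ (List.mem_map_of_mem (f := bump) hp)
      simp only [pVerts, bump, List.mem_cons] at this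
      rcases this with h' | h'
      · simp at h'
      · exact (mem_map_bump pVerts_ne_nil).1 h'
  · rintro ⟨rfl, h⟩
    intro p hp
    simp only [pVerts, List.mem_cons, List.mem_append, List.mem_map] at hp ⊢
    rcases hp with rfl | ⟨q, hq, rfl⟩ | ⟨q, hq, rfl⟩
    · exact Or.inl rfl
    · exact Or.inr (Or.inl ⟨q, hq, rfl⟩)
    · exact Or.inr (Or.inr ⟨q, h q hq, rfl⟩)

theorem cutLE_branch_full {l ts : List RTree} {es cs ds : List CutShape} :
    cutLE (.node l :: ts) (.branch es :: cs) (.full :: ds) ↔ cutLE ts cs ds := by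
  constructor
  · intro h p hp
    have hpne := pVerts_ne_nil p hp
    cases p with
    | nil => exact absurd rfl hpne
    | cons i q =>
      have : bump (i :: q) ∈ pVerts (.node l :: ts) (CutShape.full :: ds) := by
        apply h
        simp only [pVerts]
        exact List.mem_append_right _ (List.mem_map_of_mem (f := bump) hp)
      simp only [pVerts, bump, List.mem_cons] at this
      rcases this with h' | h'
      · simp at h'
      · exact (mem_map_bump pVerts_ne_nil).1 h'
  · intro h p hp
    simp only [pVerts, List.mem_append, List.mem_map, List.mem_cons] at hp ⊢
    rcases hp with ⟨q, hq, rfl⟩ | ⟨q, hq, rfl⟩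
    · exact Or.inr (Or.inl ⟨q, pVerts_subset_posF l es q hq, rfl⟩)
    · exact Or.inr (Or.inr ⟨q, h q hq, rfl⟩)

theorem cutLE_branch_branch {l ts : List RTree} {es fs cs ds : List CutShape} :
    cutLE (.node l :: ts) (.branch es :: cs) (.branch fs :: ds) ↔
      cutLE l es fs ∧ cutLE ts cs ds := by
  constructor
  · intro h
    constructor
    · intro p hp
      have : (0 :: p) ∈ pVerts (.node l :: ts) (CutShape.branch fs :: ds) := by
        apply h
        simp only [pVerts]
        exact List.mem_append_left _ (List.mem_map_of_mem hp)
      simp only [pVerts] at this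
      exact (mem_map_cons0 pVerts_ne_nil).1 this
    · intro p hp
      have hpne := pVerts_ne_nil p hp
      cases p with
      | nil => exact absurd rfl hpne
      | cons i q =>
        have : bump (i :: q) ∈ pVerts (.node l :: ts) (CutShape.branch fs :: ds) := by
          apply h
          simp only [pVerts]
          exact List.mem_append_right _ (List.mem_map_of_mem (f := bump) hp)
        simp only [pVerts, bump] at this
        exact (mem_map_bump pVerts_ne_nil).1 this
  · rintro ⟨h1, h2⟩ p hp
    simp only [pVerts, List.mem_append, List.mem_map] at hp ⊢
    rcases hp with ⟨q, hq, rfl⟩ | ⟨q, hq, rfl⟩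
    · exact Or.inl ⟨q, h1 q hq, rfl⟩
    · exact Or.inr ⟨q, h2 q hq, rfl⟩

theorem cutLE_full_cons_not_branch {l ts : List RTree} {cs fs ds : List CutShape} :
    ¬ cutLE (.node l :: ts) (.full :: cs) (.branch fs :: ds) := by
  intro h
  rcases cutLE_full_cons.1 h with ⟨h', _⟩
  exact absurd h' (by simp)

-- ### the quotient / extension maps on cuts

def quotF : List RTree → List CutShape → List CutShape → List CutShape
  | [], _, _ => []
  | _ :: ts, .full :: cs, _ :: ds => quotF ts cs ds
  | .node _ :: ts, .branch _ :: cs, .full :: ds => .full :: quotF ts cs ds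
  | .node l :: ts, .branch es :: cs, .branch fs :: ds =>
      .branch (quotF l es fs) :: quotF ts cs ds
  | _, _, _ => []

def extF : List RTree → List CutShape → List CutShape → List CutShape
  | [], _, _ => []
  | _ :: ts, .full :: cs, es => .full :: extF ts cs es
  | _ :: ts, .branch _ :: cs, .full :: es => .full :: extF ts cs es
  | .node l :: ts, .branch ds :: cs, .branch fs :: es =>
      .branch (extF l ds fs) :: extF ts cs es
  | _, _, _ => []

theorem quot_mem : ∀ (B : List RTree) (C D : List CutShape),
    C ∈ cutsF B → D ∈ cutsF B → cutLE B C D → quotF B C D ∈ cutsF (Rcut B C)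
  | [], C, D, hC, hD, _ => by
    rw [mem_cutsF_nil] at hC hD; subst hC; subst hD
    simp [quotF, Rcut, mem_cutsF_nil]
  | .node l :: ts, C, D, hC, hD, h => by
    match C, D with
    | [], _ => exact absurd hC nil_not_mem_cutsF
    | _ :: _, [] => exact absurd hD nil_not_mem_cutsF
    | .full :: cs, d :: ds =>
      obtain ⟨rfl, hds⟩ := cutLE_full_cons.1 h
      rw [mem_cutsF_cons] at hC hD
      simpa [quotF, Rcut] using quot_mem ts cs ds hC.2 hD.2 hds
    | .branch es :: cs, .full :: ds =>
      rw [mem_cutsF_cons] at hC hD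
      have hts := quot_mem ts cs ds hC.2 hD.2 (cutLE_branch_full.1 h)
      simp only [quotF, Rcut]
      exact mem_cutsF_cons.2 ⟨Or.inl rfl, hts⟩
    | .branch es :: cs, .branch fs :: ds =>
      rw [mem_cutsF_cons] at hC hD
      obtain ⟨h1, h2⟩ := cutLE_branch_branch.1 h
      rcases hC.1 with h' | ⟨es', hes', he⟩
      · exact absurd h' (by simp)
      rcases hD.1 with h' | ⟨fs', hfs', hf⟩
      · exact absurd h' (by simp)
      injection he with he; subst he
      injection hf with hf; subst hf
      have hl := quot_mem l es fs hes' hfs' h1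
      have hts := quot_mem ts cs ds hC.2 hD.2 h2
      simp only [quotF, Rcut]
      exact mem_cutsF_cons.2 ⟨Or.inr ⟨_, hl, rfl⟩, hts⟩

theorem Rcut_quot : ∀ (B : List RTree) (C D : List CutShape),
    C ∈ cutsF B → D ∈ cutsF B → cutLE B C D →
    Rcut B D = Rcut (Rcut B C) (quotF B C D)
  | [], C, D, hC, hD, _ => by
    rw [mem_cutsF_nil] at hC hD; subst hC; subst hD; simp [Rcut, quotF]
  | .node l :: ts, C, D, hC, hD, h => by
    match C, D with
    | [], _ => exact absurd hC nil_not_mem_cutsF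
    | _ :: _, [] => exact absurd hD nil_not_mem_cutsF
    | .full :: cs, d :: ds =>
      obtain ⟨rfl, hds⟩ := cutLE_full_cons.1 h
      rw [mem_cutsF_cons] at hC hD
      simpa [quotF, Rcut] using Rcut_quot ts cs ds hC.2 hD.2 hds
    | .branch es :: cs, .full :: ds =>
      rw [mem_cutsF_cons] at hC hD
      simp only [quotF, Rcut]
      exact Rcut_quot ts cs ds hC.2 hD.2 (cutLE_branch_full.1 h)
    | .branch es :: cs, .branch fs :: ds =>
      rw [mem_cutsF_cons] at hC hD
      obtain ⟨h1, h2⟩ := cutLE_branch_branch.1 h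
      rcases hC.1 with h' | ⟨es', hes', he⟩
      · exact absurd h' (by simp)
      rcases hD.1 with h' | ⟨fs', hfs', hf⟩
      · exact absurd h' (by simp)
      injection he with he; subst he
      injection hf with hf; subst hf
      simp only [quotF, Rcut]
      rw [Rcut_quot l es fs hes' hfs' h1, Rcut_quot ts cs ds hC.2 hD.2 h2]

theorem ext_mem_le : ∀ (B : List RTree) (C E : List CutShape),
    C ∈ cutsF B → E ∈ cutsF (Rcut B C) →
    extF B C E ∈ cutsF B ∧ cutLE B C (extF B C E)
  | [], C, E, hC, hE => by
    rw [mem_cutsF_nil] at hC; subst hC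
    simp only [Rcut, mem_cutsF_nil] at hE; subst hE
    exact ⟨by simp [extF, mem_cutsF_nil], by simp [extF]; intro p hp; exact hp⟩
  | .node l :: ts, C, E, hC, hE => by
    match C with
    | [] => exact absurd hC nil_not_mem_cutsF
    | .full :: cs =>
      rw [mem_cutsF_cons] at hC
      simp only [Rcut] at hE
      obtain ⟨hm, hle⟩ := ext_mem_le ts cs E hC.2 hE
      simp only [extF]
      refine ⟨mem_cutsF_cons.2 ⟨Or.inl rfl, hm⟩, ?_⟩
      exact cutLE_full_cons.2 ⟨rfl, hle⟩
    | .branch ds :: cs =>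
      rw [mem_cutsF_cons] at hC
      rcases hC.1 with h' | ⟨ds', hds', he⟩
      · exact absurd h' (by simp)
      injection he with he; subst he
      simp only [Rcut] at hE
      match E with
      | [] => exact absurd hE nil_not_mem_cutsF
      | .full :: es =>
        rw [mem_cutsF_cons] at hE
        obtain ⟨hm, hle⟩ := ext_mem_le ts cs es hC.2 hE.2
        simp only [extF]
        refine ⟨mem_cutsF_cons.2 ⟨Or.inl rfl, hm⟩, ?_⟩
        exact cutLE_branch_full.2 hle
      | .branch fs :: es =>
        rw [mem_cutsF_cons] at hE
        rcases hE.1 with h' | ⟨fs', hfs', hf⟩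
        · exact absurd h' (by simp)
        injection hf with hf; subst hf
        obtain ⟨hm1, hle1⟩ := ext_mem_le l ds fs hds' hfs'
        obtain ⟨hm2, hle2⟩ := ext_mem_le ts cs es hC.2 hE.2
        simp only [extF]
        refine ⟨mem_cutsF_cons.2 ⟨Or.inr ⟨_, hm1, rfl⟩, hm2⟩, ?_⟩
        exact cutLE_branch_branch.2 ⟨hle1, hle2⟩

theorem ext_quot : ∀ (B : List RTree) (C D : List CutShape),
    C ∈ cutsF B → D ∈ cutsF B → cutLE B C D → extF B C (quotF B C D) = D
  | [], C, D, hC, hD, _ => by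
    rw [mem_cutsF_nil] at hC hD; subst hC; subst hD; simp [extF, quotF]
  | .node l :: ts, C, D, hC, hD, h => by
    match C, D with
    | [], _ => exact absurd hC nil_not_mem_cutsF
    | _ :: _, [] => exact absurd hD nil_not_mem_cutsF
    | .full :: cs, d :: ds =>
      obtain ⟨rfl, hds⟩ := cutLE_full_cons.1 h
      rw [mem_cutsF_cons] at hC hD
      simp only [quotF, extF]
      rw [ext_quot ts cs ds hC.2 hD.2 hds]
    | .branch es :: cs, .full :: ds =>
      rw [mem_cutsF_cons] at hC hD
      simp only [quotF, extF]
      rw [ext_quot ts cs ds hC.2 hD.2 (cutLE_branch_full.1 h)]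
    | .branch es :: cs, .branch fs :: ds =>
      rw [mem_cutsF_cons] at hC hD
      obtain ⟨h1, h2⟩ := cutLE_branch_branch.1 h
      rcases hC.1 with h' | ⟨es', hes', he⟩
      · exact absurd h' (by simp)
      rcases hD.1 with h' | ⟨fs', hfs', hf⟩
      · exact absurd h' (by simp)
      injection he with he; subst he
      injection hf with hf; subst hf
      simp only [quotF, extF]
      rw [ext_quot l es fs hes' hfs' h1, ext_quot ts cs ds hC.2 hD.2 h2]

theorem quot_ext : ∀ (B : List RTree) (C E : List CutShape),
    C ∈ cutsF B → E ∈ cutsF (Rcut B C) → quotF B C (extF B C E) = E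
  | [], C, E, hC, hE => by
    rw [mem_cutsF_nil] at hC; subst hC
    simp only [Rcut, mem_cutsF_nil] at hE; subst hE; simp [extF, quotF]
  | .node l :: ts, C, E, hC, hE => by
    match C with
    | [] => exact absurd hC nil_not_mem_cutsF
    | .full :: cs =>
      rw [mem_cutsF_cons] at hC
      simp only [Rcut] at hE
      simp only [extF, quotF]
      exact quot_ext ts cs E hC.2 hE
    | .branch ds :: cs =>
      rw [mem_cutsF_cons] at hC
      rcases hC.1 with h' | ⟨ds', hds', he⟩
      · exact absurd h' (by simp)
      injection he with he; subst he
      simp only [Rcut] at hE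
      match E with
      | [] => exact absurd hE nil_not_mem_cutsF
      | .full :: es =>
        rw [mem_cutsF_cons] at hE
        simp only [extF, quotF]
        rw [quot_ext ts cs es hC.2 hE.2]
      | .branch fs :: es =>
        rw [mem_cutsF_cons] at hE
        rcases hE.1 with h' | ⟨fs', hfs', hf⟩
        · exact absurd h' (by simp)
        injection hf with hf; subst hf
        simp only [extF, quotF]
        rw [quot_ext l ds fs hds' hfs', quot_ext ts cs es hC.2 hE.2]

theorem quot_le_iff_aux : ∀ (n : ℕ) (B : List RTree), sizeL B ≤ n →
    ∀ (C D D' : List CutShape),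
    C ∈ cutsF B → D ∈ cutsF B → D' ∈ cutsF B → cutLE B C D → cutLE B C D' →
    (cutLE B D D' ↔ cutLE (Rcut B C) (quotF B C D) (quotF B C D')) := by
  intro n
  induction n with
  | zero =>
    intro B hB C D D' hC hD hD' h1 h2
    match B with
    | [] =>
      rw [mem_cutsF_nil] at hC hD hD'; subst hC; subst hD; subst hD'
      constructor <;> (intro _ p hp; simp [pVerts, Rcut, quotF] at hp)
    | .node l :: ts => simp [sizeL] at hB
  | succ n ih =>
    intro B hB C D D' hC hD hD' h1 h2
    match B with
    | [] =>
      rw [mem_cutsF_nil] at hC hD hD'; subst hC; subst hD; subst hD'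
      constructor <;> (intro _ p hp; simp [pVerts, Rcut, quotF] at hp)
    | .node l :: ts =>
      simp only [sizeL] at hB
      have hl : sizeL l ≤ n := by omega
      have hts : sizeL ts ≤ n := by omega
      match C, D, D' with
      | [], _, _ => exact absurd hC nil_not_mem_cutsF
      | _ :: _, [], _ => exact absurd hD nil_not_mem_cutsF
      | _ :: _, _ :: _, [] => exact absurd hD' nil_not_mem_cutsF
      | .full :: cs, d :: ds, d' :: ds' =>
        obtain ⟨rfl, hds⟩ := cutLE_full_cons.1 h1
        obtain ⟨rfl, hds'⟩ := cutLE_full_cons.1 h2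
        rw [mem_cutsF_cons] at hC hD hD'
        have hrec := ih ts hts cs ds ds' hC.2 hD.2 hD'.2 hds hds'
        simp only [quotF, Rcut]
        rw [cutLE_full_cons, ← hrec]
        simp
      | .branch es :: cs, .full :: ds, .full :: ds' =>
        rw [mem_cutsF_cons] at hC hD hD'
        have hrec := ih ts hts cs ds ds' hC.2 hD.2 hD'.2
          (cutLE_branch_full.1 h1) (cutLE_branch_full.1 h2)
        simp only [quotF, Rcut]
        rw [cutLE_full_cons, cutLE_full_cons, ← hrec]
      | .branch es :: cs, .full :: ds, .branch fs' :: ds' =>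
        rw [mem_cutsF_cons] at hC hD hD'
        simp only [quotF, Rcut]
        constructor
        · intro h; exact absurd (cutLE_full_cons.1 h).1 (by simp)
        · intro h; exact absurd (cutLE_full_cons.1 h).1 (by simp)
      | .branch es :: cs, .branch fs :: ds, .full :: ds' =>
        rw [mem_cutsF_cons] at hC hD hD'
        rcases hC.1 with h' | ⟨es', hes', he⟩
        · exact absurd h' (by simp)
        injection he with he; subst he
        have hrec := ih ts hts cs ds ds' hC.2 hD.2 hD'.2
          (cutLE_branch_branch.1 h1).2 (cutLE_branch_full.1 h2)
        simp only [quotF, Rcut]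
        rw [cutLE_branch_full, cutLE_branch_full, ← hrec]
      | .branch es :: cs, .branch fs :: ds, .branch fs' :: ds' =>
        rw [mem_cutsF_cons] at hC hD hD'
        rcases hC.1 with h' | ⟨es', hes', he⟩
        · exact absurd h' (by simp)
        rcases hD.1 with h' | ⟨fs₀, hfs₀, hf⟩
        · exact absurd h' (by simp)
        rcases hD'.1 with h' | ⟨fs₁, hfs₁, hf'⟩
        · exact absurd h' (by simp)
        injection he with he; subst he
        injection hf with hf; subst hf
        injection hf' with hf'; subst hf'
        obtain ⟨ha1, ha2⟩ := cutLE_branch_branch.1 h1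
        obtain ⟨hb1, hb2⟩ := cutLE_branch_branch.1 h2
        have hrec1 := ih l hl es fs fs' hes' hfs₀ hfs₁ ha1 hb1
        have hrec2 := ih ts hts cs ds ds' hC.2 hD.2 hD'.2 ha2 hb2
        simp only [quotF, Rcut]
        rw [cutLE_branch_branch, cutLE_branch_branch, ← hrec1, ← hrec2]

theorem quot_le_iff (B : List RTree) (C D D' : List CutShape)
    (hC : C ∈ cutsF B) (hD : D ∈ cutsF B) (hD' : D' ∈ cutsF B)
    (h1 : cutLE B C D) (h2 : cutLE B C D') :
    cutLE B D D' ↔ cutLE (Rcut B C) (quotF B C D) (quotF B C D') :=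
  quot_le_iff_aux (sizeL B) B le_rfl C D D' hC hD hD' h1 h2

/-- STATEMENT 19: for a (labeled) rooted forest `B` and an admissible cut `C`
of `B`, there is a bijection `D ↦ D̄` from the admissible cuts `D` of `B` with
`C ⊆ D` onto the admissible cuts of `R_C(B)` which preserves inclusion in both
directions and satisfies `R_D(B) ≅ R_{D̄}(R_C(B))`. -/
theorem cuts_above_correspond_to_cuts_of_quotient
    (B : List RTree) (C : List CutShape) (hC : C ∈ cutsF B) :
    ∃ Φ : {D : List CutShape // D ∈ cutsF B ∧ cutLE B C D}
          ≃ {E : List CutShape // E ∈ cutsF (Rcut B C)},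
      (∀ D D' : {D : List CutShape // D ∈ cutsF B ∧ cutLE B C D},
        cutLE B D.1 D'.1 ↔ cutLE (Rcut B C) (Φ D).1 (Φ D').1) ∧
      (∀ D : {D : List CutShape // D ∈ cutsF B ∧ cutLE B C D},
        clF (Rcut B D.1) = clF (Rcut (Rcut B C) (Φ D).1)) := by
  refine ⟨⟨fun D => ⟨quotF B C D.1, quot_mem B C D.1 hC D.2.1 D.2.2⟩,
    fun E => ⟨extF B C E.1, (ext_mem_le B C E.1 hC E.2).1, (ext_mem_le B C E.1 hC E.2).2⟩,
    fun D => Subtype.ext (ext_quot B C D.1 hC D.2.1 D.2.2),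
    fun E => Subtype.ext (quot_ext B C E.1 hC E.2)⟩,
    fun D D' => quot_le_iff B C D.1 D'.1 hC D.2.1 D'.2.1 D.2.2 D'.2.2,
    fun D => by simp only [Equiv.coe_fn_mk]; rw [← Rcut_quot B C D.1 hC D.2.1 D.2.2]⟩

end CK
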